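/- Let (A, \alpha) be a multiplicative Hom-associative algebra and identify cochains \varphi : A^{\otimes n} \to A^* with maps \phi : A^{\otimes n+1} \to k via \phi(a_0 \otimes ... \otimes a_n) = \varphi(a_1 \otimes ... \otimes a_n)(a_0). Define t_n\phi(a_0 \otimes ... \otimes a_n) = (-1)^n \phi(a_n \otimes a_0 \otimes ... \otimes a_{n-1}) and the Hochschild coboundary b\phi(a_0 \otimes ... \otimes a_{n+1}) = \phi(a_0 a_1 \otimes \alpha(a_2) \otimes ... \otimes \alpha(a_{n+1})) + \sum_{j=1}^n (-1)^j \phi(\alpha(a_0) \otimes ... \otimes a_j a_{j+1} \otimes ... \otimes \alpha(a_{n+1})) + (-1)^{n+1} \phi(a_{n+1} a_0 \otimes \alpha(a_1) \otimes ... \otimes \alpha(a_n)). Then if \phi satisfies t_n\phi = \phi, then t_{n+1}(b\phi) = b\phi, i.e. the cyclic cochains form a subcomplex. -/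

import Mathlib

/-- The `i`-th Hochschild coface data: the map `A^{⊗(n+2)} → A^{⊗(n+1)}` on elementary
tensors, twisted by `γ` and with product `m`; the coface `δ_i φ = φ ∘ cFace γ m n i`. -/
def cFace {A : Type*} (γ : A → A) (m : A → A → A) (n : ℕ) (i : Fin (n + 2))
    (a : Fin (n + 2) → A) : Fin (n + 1) → A :=
  if (i : ℕ) = n + 1 then
    fun j => if (j : ℕ) = 0 then m (a (Fin.last (n + 1))) (a 0) else γ (a j.castSucc)
  else fun j =>
    if (j : ℕ) < (i : ℕ) then γ (a j.castSucc)
    else if (j : ℕ) = (i : ℕ) then m (a j.castSucc) (a j.succ)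
    else γ (a j.succ)

lemma sub_one_val {N : ℕ} (x : Fin (N + 1)) :
    ((x - 1 : Fin (N + 1)) : ℕ) = if (x : ℕ) = 0 then N else (x : ℕ) - 1 := by
  rw [Fin.sub_def]
  rcases eq_or_ne (x : ℕ) 0 with h | h
  · rw [if_pos h, h]
    have h1 : ((1 : Fin (N+1)) : ℕ) = 1 % (N+1) := rfl
    rw [h1]
    rcases eq_or_ne N 0 with hN | hN
    · subst hN; rfl
    · have h2 : 1 % (N+1) = 1 := Nat.mod_eq_of_lt (by omega)
      rw [h2]
      show (N + 1 - 1 + 0) % (N + 1) = N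
      simp [Nat.mod_eq_of_lt]
  · rw [if_neg h]
    have h1 : ((1 : Fin (N+1)) : ℕ) = 1 % (N+1) := rfl
    rw [h1]
    rcases eq_or_ne N 0 with hN | hN
    · exfalso; have := x.isLt; omega
    · have h2 : 1 % (N+1) = 1 := Nat.mod_eq_of_lt (by omega)
      rw [h2]
      show (N + 1 - 1 + (x:ℕ)) % (N + 1) = (x:ℕ) - 1
      have hx := x.isLt
      have h3 : N + 1 - 1 + (x : ℕ) = ((x:ℕ) - 1) + (N + 1) := by omega
      rw [h3, Nat.add_mod_right, Nat.mod_eq_of_lt (by omega)]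

lemma key0 {A : Type*} (γ : A → A) (m : A → A → A) (n : ℕ) (a : Fin (n + 2) → A) :
    cFace γ m n 0 (fun j => a (j - 1)) = cFace γ m n (Fin.last (n + 1)) a := by
  unfold cFace
  rw [if_neg (show (((0 : Fin (n+2)) : ℕ)) ≠ n + 1 by simp),
    if_pos (show ((Fin.last (n+1) : Fin (n+2)) : ℕ) = n + 1 from Fin.val_last _)]
  funext j
  have e1 : ∀ (x y : Fin (n+2)), (x:ℕ) = (y:ℕ) → a x = a y :=
    fun x y h => congrArg a (Fin.ext h)
  simp only [Fin.coe_castSucc, Fin.val_succ, Fin.val_last, Fin.val_zero,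
    Fin.val_one, sub_one_val, Fin.isValue]
  by_cases hj : (j:ℕ) = 0 <;> simp only [hj, ↓reduceIte] <;>
  first
    | (refine congrArg γ (e1 _ _ ?_);
       simp only [sub_one_val, Fin.coe_castSucc, Fin.val_succ, Fin.val_last,
         Fin.val_zero, Fin.val_one];
       split_ifs <;> first | contradiction | omega)
    | (refine congrArg₂ m (e1 _ _ ?_) (e1 _ _ ?_) <;>
       (simp only [sub_one_val, Fin.coe_castSucc, Fin.val_succ, Fin.val_last,
          Fin.val_zero, Fin.val_one];
        split_ifs <;> first | contradiction | omega))
    | contradiction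
    | (exfalso; omega)

lemma key1 {A : Type*} (γ : A → A) (m : A → A → A) (n : ℕ) (a : Fin (n + 2) → A)
    (i : Fin (n + 1)) :
    cFace γ m n i.succ (fun j => a (j - 1))
      = fun j => cFace γ m n i.castSucc a (j - 1) := by
  have hiv := i.isLt
  unfold cFace
  rw [if_neg (show ((i.castSucc : Fin (n+2)) : ℕ) ≠ n + 1 by
        simp only [Fin.coe_castSucc]; omega)]
  by_cases hlast : ((i.succ : Fin (n+2)) : ℕ) = n + 1
  · rw [if_pos hlast]
    have hin : (i : ℕ) = n := by simpa [Fin.val_succ] using hlast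
    funext j
    have e1 : ∀ (x y : Fin (n+2)), (x:ℕ) = (y:ℕ) → a x = a y :=
      fun x y h => congrArg a (Fin.ext h)
    have hjv := j.isLt
    simp only [Fin.coe_castSucc, Fin.val_succ, Fin.val_last, Fin.val_zero,
      Fin.val_one, sub_one_val, Fin.isValue]
    split_ifs <;>
    first
      | (refine congrArg γ (e1 _ _ ?_);
         simp only [sub_one_val, Fin.coe_castSucc, Fin.val_succ, Fin.val_last,
           Fin.val_zero, Fin.val_one];
         split_ifs <;> first | contradiction | omega)
      | (refine congrArg₂ m (e1 _ _ ?_) (e1 _ _ ?_) <;>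
         (simp only [sub_one_val, Fin.coe_castSucc, Fin.val_succ, Fin.val_last,
            Fin.val_zero, Fin.val_one];
          split_ifs <;> first | contradiction | omega))
      | contradiction
      | (exfalso; omega)
  · rw [if_neg hlast]
    have hin : (i : ℕ) < n := by
      simp only [Fin.val_succ] at hlast; omega
    funext j
    have e1 : ∀ (x y : Fin (n+2)), (x:ℕ) = (y:ℕ) → a x = a y :=
      fun x y h => congrArg a (Fin.ext h)
    have hjv := j.isLt
    simp only [Fin.coe_castSucc, Fin.val_succ, Fin.val_last, Fin.val_zero,
      Fin.val_one, sub_one_val, Fin.isValue]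
    split_ifs <;>
    first
      | (refine congrArg γ (e1 _ _ ?_);
         simp only [sub_one_val, Fin.coe_castSucc, Fin.val_succ, Fin.val_last,
           Fin.val_zero, Fin.val_one];
         split_ifs <;> first | contradiction | omega)
      | (refine congrArg₂ m (e1 _ _ ?_) (e1 _ _ ?_) <;>
         (simp only [sub_one_val, Fin.coe_castSucc, Fin.val_succ, Fin.val_last,
            Fin.val_zero, Fin.val_one];
          split_ifs <;> first | contradiction | omega))
      | contradiction
      | (exfalso; omega)

/-- For a multiplicative Hom-associative algebra `A`, if a cochain
`φ : A^{⊗(n+1)} → k` is cyclic (`t_n φ = φ`), then its Hochschild coboundary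
`b φ = Σ_{i=0}^{n+1} (-1)^i φ ∘ δ_i` is also cyclic (`t_{n+1}(bφ) = bφ`):
the cyclic cochains form a subcomplex. -/
theorem stmt_17 {k A : Type*} [Field k] [NonUnitalNonAssocRing A] [Module k A]
    [SMulCommClass k A A] [IsScalarTower k A A]
    (α : A →ₗ[k] A)
    (hassoc : ∀ a b c : A, α a * (b * c) = (a * b) * α c)
    (hmul : ∀ a b : A, α (a * b) = α a * α b)
    (n : ℕ) (φ : MultilinearMap k (fun _ : Fin (n + 1) => A) k)
    (hcyc : ∀ a : Fin (n + 1) → A, ((-1 : k) ^ n) * φ (fun j => a (j - 1)) = φ a) :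
    ∀ a : Fin (n + 2) → A,
      ((-1 : k) ^ (n + 1)) *
        (∑ i : Fin (n + 2), ((-1 : k) ^ (i : ℕ)) *
          φ (cFace (⇑α) (· * ·) n i (fun j => a (j - 1)))) =
      ∑ i : Fin (n + 2), ((-1 : k) ^ (i : ℕ)) * φ (cFace (⇑α) (· * ·) n i a) := by
  intro a
  rw [Fin.sum_univ_succ
      (f := fun i => ((-1 : k) ^ (i : ℕ)) * φ (cFace (⇑α) (· * ·) n i (fun j => a (j - 1)))),
    Fin.sum_univ_castSucc
      (f := fun i => ((-1 : k) ^ (i : ℕ)) * φ (cFace (⇑α) (· * ·) n i a)),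
    mul_add, add_comm (∑ i : Fin (n + 1), ((-1 : k) ^ ((i.castSucc : Fin (n+2)) : ℕ)) *
      φ (cFace (⇑α) (· * ·) n i.castSucc a))]
  congr 1
  · rw [key0]
    simp [Fin.val_last]
  · rw [Finset.mul_sum]
    refine Finset.sum_congr rfl fun i _ => ?_
    rw [key1]
    have h := hcyc (cFace (⇑α) (· * ·) n i.castSucc a)
    rw [Fin.val_succ, Fin.coe_castSucc, pow_succ, ← h]
    ring
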